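/- For d ∈ {1,...,9}, the function g_d : [1/(10d), 1/(d+1)] → ℝ defined by g_d(x) = (d+1)·β_d·x − (10/9)·x·(ln x + ln(d+1)), with β_d = 10·(9 + ln 10 + 9d·ln(1 − 1/(d+1)))/(81(d+1)), attains its maximum at x₁ = 10^{1/9}·(1 − 1/(d+1))^d/(d+1), and the maximum value equals 10^{10/9}·(1 − 1/(d+1))^d/(9(d+1)). -/

import Mathlib

noncomputable def beta (d : ℕ) : ℝ :=
  10 * (9 + Real.log 10 + 9 * (d : ℝ) * Real.log (1 - 1 / ((d : ℝ) + 1))) / (81 * ((d : ℝ) + 1))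

noncomputable def g (d : ℕ) (x : ℝ) : ℝ :=
  ((d : ℝ) + 1) * beta d * x - (10 / 9) * x * (Real.log x + Real.log ((d : ℝ) + 1))

theorem g_max (d : ℕ) (hd : d ∈ Finset.Icc 1 9) :
    let x₁ : ℝ := (10 : ℝ) ^ ((1 : ℝ) / 9) * (1 - 1 / ((d : ℝ) + 1)) ^ (d : ℕ) / ((d : ℝ) + 1)
    x₁ ∈ Set.Icc (1 / (10 * (d : ℝ))) (1 / ((d : ℝ) + 1)) ∧
    (∀ x ∈ Set.Icc (1 / (10 * (d : ℝ))) (1 / ((d : ℝ) + 1)), g d x ≤ g d x₁) ∧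
    g d x₁ = (10 : ℝ) ^ ((10 : ℝ) / 9) * (1 - 1 / ((d : ℝ) + 1)) ^ (d : ℕ) / (9 * ((d : ℝ) + 1)) := by
  intro x₁
  have hd1 : 1 ≤ d := (Finset.mem_Icc.mp hd).1
  have hD : (1 : ℝ) ≤ (d : ℝ) := by exact_mod_cast hd1
  set D : ℝ := (d : ℝ) with hDdef
  have hD0 : 0 < D := by linarith
  have hD1 : 0 < D + 1 := by linarith
  set c : ℝ := D / (D + 1) with hcdef
  have hc0 : 0 < c := by positivity
  have hcd : 1 - 1 / (D + 1) = c := by rw [hcdef]; field_simp; ring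
  have hr0 : (0:ℝ) < (10:ℝ) ^ ((1:ℝ)/9) := Real.rpow_pos_of_pos (by norm_num) _
  have hx₁ : x₁ = (10:ℝ) ^ ((1:ℝ)/9) * c ^ d / (D + 1) := by
    show (10:ℝ) ^ ((1:ℝ)/9) * (1 - 1 / (D + 1)) ^ d / (D + 1) = _
    rw [hcd]
  have hx₁pos : 0 < x₁ := by rw [hx₁]; positivity
  have hlog : Real.log x₁ = (1/9) * Real.log 10 + (d:ℝ) * Real.log c - Real.log (D+1) := by
    rw [hx₁, Real.log_div (by positivity) (by positivity),
      Real.log_mul (by positivity) (by positivity), Real.log_rpow (by norm_num),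
      Real.log_pow]
  have hA : (D + 1) * beta d = 10/9 + (10/9) * (Real.log x₁ + Real.log (D+1)) := by
    unfold beta
    rw [← hDdef, hcd, hlog, ← hDdef]
    field_simp
    ring
  have hg : ∀ x : ℝ, g d x = (10/9) * x * (1 + Real.log x₁ - Real.log x) := by
    intro x
    unfold g
    rw [← hDdef, hA]
    ring
  have hgx₁ : g d x₁ = 10/9 * x₁ := by rw [hg x₁]; ring
  -- numeric bounds
  have hr1 : (1:ℝ) ≤ (10:ℝ) ^ ((1:ℝ)/9) := by
    calc (1:ℝ) = (10:ℝ) ^ (0:ℝ) := (Real.rpow_zero 10).symm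
    _ ≤ _ := Real.rpow_le_rpow_of_exponent_le (by norm_num) (by norm_num)
  have hr2 : (10:ℝ) ^ ((1:ℝ)/9) ≤ 2 := by
    have h512 : (512:ℝ) = (2:ℝ) ^ (9:ℝ) := by
      rw [show (9:ℝ) = ((9:ℕ):ℝ) by norm_num, Real.rpow_natCast]; norm_num
    calc (10:ℝ) ^ ((1:ℝ)/9) ≤ (512:ℝ) ^ ((1:ℝ)/9) :=
          Real.rpow_le_rpow (by norm_num) (by norm_num) (by norm_num)
    _ = 2 := by
        rw [h512, ← Real.rpow_mul (by norm_num), show (9:ℝ) * (1/9) = 1 by norm_num,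
          Real.rpow_one]
  have hDinv : (0:ℝ) < 1/D := by positivity
  have hB1 : (2:ℝ) ≤ ((D+1)/D) ^ d := by
    have h := one_add_mul_le_pow (a := 1/D) (by linarith) d
    have h2 : (1:ℝ) + (d:ℝ) * (1/D) = 2 := by
      rw [← hDdef, mul_one_div, div_self hD0.ne']; norm_num
    have h3 : (1:ℝ) + 1/D = (D+1)/D := by field_simp
    rw [h2, h3] at h
    exact h
  have hB2 : ((D+1)/D) ^ d ≤ 3 := by
    have h1 : (D+1)/D ≤ Real.exp (1/D) := by
      have h := Real.add_one_le_exp (1/D)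
      have h3 : (1:ℝ)/D + 1 = (D+1)/D := by field_simp; ring
      linarith [h3 ▸ h]
    calc ((D+1)/D) ^ d ≤ (Real.exp (1/D)) ^ d := pow_le_pow_left₀ (by positivity) h1 d
    _ = Real.exp ((d:ℝ) * (1/D)) := (Real.exp_nat_mul _ d).symm
    _ = Real.exp 1 := by
        rw [← hDdef, mul_one_div, div_self hD0.ne']
    _ ≤ 3 := by linarith [Real.exp_one_lt_d9]
  have hcdB : c ^ d * ((D+1)/D) ^ d = 1 := by
    rw [← mul_pow, hcdef, show D/(D+1) * ((D+1)/D) = 1 by field_simp, one_pow]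
  have hcp : 0 < c ^ d := by positivity
  have hc3 : (1:ℝ)/3 ≤ c ^ d := by
    have h := mul_le_mul_of_nonneg_left hB2 hcp.le
    rw [hcdB] at h; linarith
  have hc2 : c ^ d ≤ 1/2 := by
    have h := mul_le_mul_of_nonneg_left hB1 hcp.le
    rw [hcdB] at h; linarith
  refine ⟨?_, ?_, ?_⟩
  · constructor
    · rw [hx₁, div_le_div_iff₀ (by positivity) (by positivity)]
      have hP : (1:ℝ)/3 ≤ (10:ℝ)^((1:ℝ)/9) * c ^ d :=
        le_trans hc3 (le_mul_of_one_le_left hcp.le hr1)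
      have h := mul_le_mul_of_nonneg_right hP (show (0:ℝ) ≤ 10 * D by positivity)
      linarith
    · rw [hx₁, div_le_div_iff₀ (by positivity) (by positivity)]
      have hQ : (10:ℝ)^((1:ℝ)/9) * c ^ d ≤ 1 := by
        have := mul_le_mul hr2 hc2 hcp.le (by norm_num)
        linarith
      have h := mul_le_mul_of_nonneg_right hQ hD1.le
      linarith
  · intro x hx
    obtain ⟨hx1, hx2⟩ := hx
    have hxpos : 0 < x := lt_of_lt_of_le (by positivity) hx1
    have hkey : Real.log x₁ - Real.log x ≤ x₁ / x - 1 := by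
      have h := Real.log_le_sub_one_of_pos (show 0 < x₁ / x by positivity)
      rwa [Real.log_div (by positivity) (by positivity)] at h
    rw [hg x, hgx₁]
    have h2 : x * (Real.log x₁ - Real.log x) ≤ x₁ - x := by
      have h3 := mul_le_mul_of_nonneg_left hkey hxpos.le
      have h4 : x * (x₁ / x - 1) = x₁ - x := by field_simp
      linarith
    nlinarith [h2]
  · rw [hgx₁, hx₁, hcd]
    have h10 : (10:ℝ) ^ ((10:ℝ)/9) = 10 * (10:ℝ) ^ ((1:ℝ)/9) := by
      rw [show ((10:ℝ)/9) = 1 + (1:ℝ)/9 by norm_num, Real.rpow_add (by norm_num),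
        Real.rpow_one]
    rw [h10]
    field_simp
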